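/- Suppose 𝔴 : [1,∞) → ℝ is increasing, convex, positive, satisfies ((n-1)/n)·(𝔴')^n + 1/(2𝔴²) = 1/(2w₀²), 𝔴(1) = w₀ > 0, and 𝔴(s) → ∞ as s → ∞. Then 𝔴'(s) → p* := (n/(2(n-1)w₀²))^(1/n) as s → ∞, and 𝔴'([1,∞)) = [0, p*). -/
import Mathlib


open Real Set Filter

/-- for an increasing convex positive solution of the first integral
`((n-1)/n)(𝔴')ⁿ + 1/(2𝔴²) = 1/(2w₀²)` with `𝔴(1)=w₀>0` and `𝔴 → ∞`, one has
`𝔴' → p* = (n/(2(n-1)w₀²))^(1/n)` and `𝔴'([1,∞)) = [0, p*)`. -/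
theorem stmt6 (n : ℕ) (hn : 2 ≤ n) (w₀ : ℝ) (hw₀ : 0 < w₀)
    (W W' : ℝ → ℝ)
    (hW' : ∀ s ∈ Ici (1:ℝ), HasDerivAt W (W' s) s)
    (hmono : MonotoneOn W (Ici 1))
    (hconv : ConvexOn ℝ (Ici 1) W)
    (hpos : ∀ s ∈ Ici (1:ℝ), 0 < W s)
    (hfirst : ∀ s ∈ Ici (1:ℝ),
      ((n:ℝ) - 1) / n * (W' s) ^ n + 1 / (2 * (W s) ^ 2) = 1 / (2 * w₀ ^ 2))
    (hinit : W 1 = w₀)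
    (htop : Tendsto W atTop atTop) :
    Tendsto W' atTop (nhds (((n:ℝ) / (2 * ((n:ℝ) - 1) * w₀ ^ 2)) ^ (1 / (n:ℝ)))) ∧
      W' '' (Ici 1) = Ico 0 (((n:ℝ) / (2 * ((n:ℝ) - 1) * w₀ ^ 2)) ^ (1 / (n:ℝ))) := by
  rw [one_div]
  have hn1 : (1:ℝ) < (n:ℝ) := by exact_mod_cast hn.trans_lt' (by norm_num)
  have hn1' : (0:ℝ) < (n:ℝ) - 1 := by linarith
  have hnne : n ≠ 0 := by omega
  have hninv : (0:ℝ) < ((n:ℝ))⁻¹ := by positivity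
  have hne1 : ((n:ℝ) - 1) ≠ 0 := by linarith
  have hne2 : w₀ ≠ 0 := hw₀.ne'
  have hne3 : ((n:ℝ)) ≠ 0 := by positivity
  set c : ℝ := (n:ℝ) / (2 * ((n:ℝ) - 1) * w₀ ^ 2) with hc
  have hcpos : 0 < c := div_pos (by positivity) (by positivity)
  set g : ℝ → ℝ := fun w => ((n:ℝ) / ((n:ℝ) - 1) * (1 / (2 * w₀ ^ 2) - 1 / (2 * w ^ 2))) ^ ((n:ℝ)⁻¹) with hg
  -- basic facts for s ≥ 1
  have hWge : ∀ s ∈ Ici (1:ℝ), w₀ ≤ W s := by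
    intro s hs
    rw [← hinit]
    exact hmono (self_mem_Ici) hs hs
  have hbase : ∀ s ∈ Ici (1:ℝ), 0 ≤ 1 / (2 * w₀ ^ 2) - 1 / (2 * (W s) ^ 2) := by
    intro s hs
    have h1 := hWge s hs
    have h2 : 2 * w₀ ^ 2 ≤ 2 * (W s) ^ 2 := by nlinarith
    have := one_div_le_one_div_of_le (by positivity) h2
    linarith
  have key : ∀ s ∈ Ici (1:ℝ),
      (W' s) ^ n = (n:ℝ) / ((n:ℝ) - 1) * (1 / (2 * w₀ ^ 2) - 1 / (2 * (W s) ^ 2)) := by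
    intro s hs
    have h := hfirst s hs
    have hW0 := hpos s hs
    field_simp at h ⊢
    nlinarith [h]
  have hW'nonneg : ∀ s ∈ Ici (1:ℝ), 0 ≤ W' s := by
    intro s hs
    have hd : HasDerivWithinAt W (W' s) (Ioi s) s := (hW' s hs).hasDerivWithinAt
    rw [hasDerivWithinAt_iff_tendsto_slope] at hd
    have hset : Ioi s \ {s} = Ioi s := Set.diff_singleton_eq_self (by simp)
    rw [hset] at hd
    refine ge_of_tendsto hd ?_
    filter_upwards [self_mem_nhdsWithin] with t ht
    have hts : s < t := ht
    have hWle : W s ≤ W t := hmono hs (le_trans hs hts.le) hts.le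
    rw [slope_def_field]
    exact div_nonneg (by linarith) (by linarith)
  have hrepr : ∀ s ∈ Ici (1:ℝ), W' s = g (W s) := by
    intro s hs
    have := Real.pow_rpow_inv_natCast (hW'nonneg s hs) hnne
    rw [← this, key s hs, hg]
  -- limit of inner function
  have hinner : Tendsto (fun w : ℝ => (n:ℝ) / ((n:ℝ) - 1) * (1 / (2 * w₀ ^ 2) - 1 / (2 * w ^ 2)))
      atTop (nhds c) := by
    have h2 : Tendsto (fun w : ℝ => 2 * w ^ 2) atTop atTop :=
      (tendsto_pow_atTop (by norm_num)).const_mul_atTop (by norm_num)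
    have h1 : Tendsto (fun w : ℝ => 1 / (2 * w ^ 2)) atTop (nhds 0) := by
      simp only [one_div]
      exact h2.inv_tendsto_atTop
    have h3 := (tendsto_const_nhds (x := 1 / (2 * w₀ ^ 2)) (f := atTop (α := ℝ))).sub h1
    have h4 := h3.const_mul ((n:ℝ) / ((n:ℝ) - 1))
    have hceq : c = (n:ℝ) / ((n:ℝ) - 1) * (1 / (2 * w₀ ^ 2) - 0) := by
      rw [hc, sub_zero, div_mul_div_comm, mul_one]
      congr 1
      ring
    rw [hceq]
    exact h4
  have hgtend : Tendsto g atTop (nhds (c ^ ((n:ℝ)⁻¹))) :=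
    hinner.rpow_const (Or.inl hcpos.ne')
  have htendW' : Tendsto W' atTop (nhds (c ^ ((n:ℝ)⁻¹))) := by
    refine (hgtend.comp htop).congr' ?_
    filter_upwards [eventually_ge_atTop (1:ℝ)] with s hs
    exact (hrepr s hs).symm
  refine ⟨htendW', ?_⟩
  -- strict upper bound
  have hlt : ∀ s ∈ Ici (1:ℝ), W' s < c ^ ((n:ℝ)⁻¹) := by
    intro s hs
    rw [hrepr s hs, hg]
    have hW0 := hpos s hs
    have hp2 : (0:ℝ) < 1 / (2 * (W s) ^ 2) := by positivity
    have hlt2 : (n:ℝ) / ((n:ℝ) - 1) * (1 / (2 * w₀ ^ 2) - 1 / (2 * (W s) ^ 2)) < c := by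
      have h5 : (n:ℝ) / ((n:ℝ) - 1) * (1 / (2 * w₀ ^ 2) - 1 / (2 * (W s) ^ 2))
          < (n:ℝ) / ((n:ℝ) - 1) * (1 / (2 * w₀ ^ 2)) :=
        mul_lt_mul_of_pos_left (by linarith) (by positivity)
      have hceq : (n:ℝ) / ((n:ℝ) - 1) * (1 / (2 * w₀ ^ 2)) = c := by
        rw [hc, div_mul_div_comm, mul_one]
        congr 1
        ring
      linarith [hceq ▸ h5]
    exact Real.rpow_lt_rpow (mul_nonneg (by positivity) (hbase s hs)) hlt2 hninv
  have hW'1 : W' 1 = 0 := by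
    have h := key 1 self_mem_Ici
    rw [hinit, sub_self, mul_zero, pow_eq_zero_iff hnne] at h
    exact h
  ext y
  constructor
  · rintro ⟨s, hs, rfl⟩
    exact ⟨hW'nonneg s hs, hlt s hs⟩
  · rintro ⟨hy0, hyp⟩
    -- find s with y < W' s
    obtain ⟨s, hs1, hsy⟩ : ∃ s, 1 ≤ s ∧ y < W' s := by
      have := (htendW'.eventually (eventually_gt_nhds hyp)).and (eventually_ge_atTop (1:ℝ))
      obtain ⟨s, h1, h2⟩ := this.exists
      exact ⟨s, h2, h1⟩
    -- continuity of W' on Icc 1 s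
    have hcont : ContinuousOn W' (Icc 1 s) := by
      have : ContinuousOn (fun t => g (W t)) (Icc 1 s) := by
        intro x hx
        have hx1 : x ∈ Ici (1:ℝ) := hx.1
        have hcW : ContinuousAt W x := (hW' x hx1).continuousAt
        have hWx := hpos x hx1
        have hinnerC : ContinuousAt
            (fun t => (n:ℝ) / ((n:ℝ) - 1) * (1 / (2 * w₀ ^ 2) - 1 / (2 * (W t) ^ 2))) x := by
          exact continuousAt_const.mul (continuousAt_const.sub
            (continuousAt_const.div (continuousAt_const.mul (hcW.pow 2)) (by positivity)))
        exact ((Real.continuousAt_rpow_const _ _ (Or.inr hninv.le)).comp hinnerC).continuousWithinAt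
      exact this.congr fun t ht => hrepr t ht.1
    have hivt := intermediate_value_Icc hs1 hcont
    have hy : y ∈ Icc (W' 1) (W' s) := by
      rw [hW'1]; exact ⟨hy0, hsy.le⟩
    obtain ⟨x, hx, hxy⟩ := hivt hy
    exact ⟨x, hx.1, hxy⟩
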